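/- Let G be a complete directed graph on a finite vertex set with arc lengths ℓ, let k ≥ 1 be an integer, and set ℓ^max = max over arcs e of |ℓ_e|. If every cycle of cardinality at most k+1 has nonnegative length, then every cycle in G has mean length at least −ℓ^max/k. -/
import Mathlib


open Finset

/-- Euclidean inner product on `ℝⁿ`. -/
def dotp {n : ℕ} (p y : Fin n → ℝ) : ℝ := ∑ i, p i * y i

/-- A bundle is a 0-1 vector. -/
def IsBundle {n : ℕ} (y : Fin n → ℝ) : Prop := ∀ i, y i = 0 ∨ y i = 1

/-- The cyclically next index in `Fin m`. -/
def cnext {m : ℕ} (i : Fin m) : Fin m := ⟨(i.val + 1) % m, Nat.mod_lt _ i.pos⟩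

-- The length of the arc of the bidding graph from bid bundle `x t` to bundle `y`:
-- the minimum of `p s · (y - x t)` over all observations `s` bidding the same bundle as `t`.
open Classical in
noncomputable def arcLen {n T : ℕ} (p x : Fin T → Fin n → ℝ) (t : Fin T)
    (y : Fin n → ℝ) : ℝ :=
  (Finset.univ.filter fun s => x s = x t).inf' ⟨t, by simp⟩
    (fun s => dotp (p s) (y - x t))

/-- `v` is an `ε`-approximate virtual valuation function for the data `(p, x)`. -/
def IsApproxVV  {n T : ℕ} (p x : Fin T → Fin n → ℝ) (ε : ℝ)
    (v : (Fin n → ℝ) → ℝ) : Prop :=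
  ∀ t : Fin T, ∀ y : Fin n → ℝ, IsBundle y →
    v (x t) - dotp (p t) (x t) ≥ v y - dotp (p t) y - ε

/-- `v` is individually rational for the data `(p, x)`. -/
def IndivRational {n T : ℕ} (p x : Fin T → Fin n → ℝ)
    (v : (Fin n → ℝ) → ℝ) : Prop :=
  ∀ t : Fin T, v (x t) ≥ dotp (p t) (x t)

/-- The set of mean lengths of cycles of the bidding graph. -/
noncomputable def meanCycleLens {n T : ℕ} (p x : Fin T → Fin n → ℝ) : Set ℝ :=
  {r | ∃ m : ℕ, 2 ≤ m ∧ ∃ c : Fin m → Fin T,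
      Function.Injective (fun i => x (c i)) ∧
      r = (∑ i : Fin m, arcLen p x (c i) (x (c (cnext i)))) / m}
lemma cnext_eq_add_one {m : ℕ} [NeZero m] (hm : 2 ≤ m) (x : Fin m) : cnext x = x + 1 := by
  have h1 : (1 : Fin m).val = 1 := by
    simp [Fin.val_one', Nat.mod_eq_of_lt (by omega : 1 < m)]
  apply Fin.ext
  show (x.val + 1) % m = (x.val + (1 : Fin m).val) % m
  rw [h1]

lemma cnext_castSucc {k : ℕ} (j : Fin k) : cnext j.castSucc = j.succ := by
  apply Fin.ext
  simp [cnext, Nat.mod_eq_of_lt (by omega : j.val + 1 < k + 1)]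

lemma cnext_last (k : ℕ) : cnext (Fin.last k) = 0 := by
  apply Fin.ext
  simp [cnext]

/-- In a complete directed graph in which every cycle of cardinality at most
`k+1` has nonnegative length, every cycle has mean length at least `-ℓmax / k`, where
`ℓmax` is the maximum of `|ℓ e|` over all arcs `e`. -/
theorem minMeanCycle_ge_of_short_cycles_nonneg {V : Type*} [Fintype V]
    (ℓ : V → V → ℝ) (k : ℕ) (hk : 1 ≤ k)
    (hV : ∃ a b : V, a ≠ b)
    (L : ℝ) (hL : IsGreatest {r : ℝ | ∃ a b : V, a ≠ b ∧ r = |ℓ a b|} L)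
    (hnn : ∀ m : ℕ, 2 ≤ m → m ≤ k + 1 → ∀ c : Fin m → V, Function.Injective c →
      0 ≤ ∑ i : Fin m, ℓ (c i) (c (cnext i))) :
    ∀ m : ℕ, 2 ≤ m → ∀ c : Fin m → V, Function.Injective c →
      -(L / k) ≤ (∑ i : Fin m, ℓ (c i) (c (cnext i))) / m := by
  intro m hm c hc
  haveI : NeZero m := ⟨by omega⟩
  have hm0 : (0:ℝ) < m := by exact_mod_cast (by omega : 0 < m)
  have hk0 : (0:ℝ) < k := by exact_mod_cast hk
  obtain ⟨a, b, hab, hLab⟩ := hL.1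
  have hL0 : 0 ≤ L := hLab ▸ abs_nonneg _
  set S := ∑ i : Fin m, ℓ (c i) (c (cnext i)) with hSdef
  by_cases hmk : m ≤ k + 1
  · have h0 : 0 ≤ S := hnn m hm hmk c hc
    have h1 : -(L/k) ≤ 0 := by
      have : 0 ≤ L / k := div_nonneg hL0 hk0.le
      linarith
    have h2 : 0 ≤ S / m := div_nonneg h0 hm0.le
    linarith
  · push_neg at hmk
    have hkm : k + 1 ≤ m := by omega
    have key : ∀ i : Fin m,
        0 ≤ (∑ j : Fin k, ℓ (c (i + Fin.castLE hkm j.castSucc))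
              (c (i + (Fin.castLE hkm j.castSucc + 1))))
          + ℓ (c (i + Fin.castLE hkm (Fin.last k))) (c i) := by
      intro i
      have hinj : Function.Injective (fun j : Fin (k+1) => c (i + Fin.castLE hkm j)) := by
        intro j1 j2 h
        exact Fin.castLE_injective hkm (add_right_injective i (hc h))
      have h := hnn (k+1) (by omega) (le_refl _) _ hinj
      rw [Fin.sum_univ_castSucc] at h
      simp only [cnext_castSucc, cnext_last] at h
      have e1 : ∀ j : Fin k, Fin.castLE hkm j.succ = Fin.castLE hkm j.castSucc + 1 := by
        intro j
        apply Fin.ext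
        have h1 : (1 : Fin m).val = 1 := by
          simp [Fin.val_one', Nat.mod_eq_of_lt (by omega : 1 < m)]
        simp [Fin.add_def, h1, Nat.mod_eq_of_lt (by omega : j.val + 1 < m)]
      have e2 : Fin.castLE hkm (0 : Fin (k+1)) = 0 := rfl
      simp only [e1, e2, add_zero] at h
      exact h
    have shift : ∀ a : Fin m, (∑ i : Fin m, ℓ (c (i + a)) (c (i + (a + 1)))) = S := by
      intro a
      have hS' : S = ∑ i : Fin m, ℓ (c i) (c (i + 1)) := by
        rw [hSdef]
        exact Finset.sum_congr rfl fun i _ => by rw [cnext_eq_add_one hm]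
      rw [hS']
      exact Fintype.sum_equiv (Equiv.addRight a) _ _ (fun x => by simp [add_assoc])
    have hsum : 0 ≤ (k : ℝ) * S
        + ∑ i : Fin m, ℓ (c (i + Fin.castLE hkm (Fin.last k))) (c i) := by
      have h := Finset.sum_nonneg (fun i (_ : i ∈ Finset.univ) => key i)
      rw [Finset.sum_add_distrib, Finset.sum_comm] at h
      calc (0:ℝ) ≤ _ := h
        _ = (k:ℝ) * S + _ := by
            congr 1
            rw [Finset.sum_congr rfl (fun j _ => shift (Fin.castLE hkm j.castSucc))]
            simp [mul_comm]
    have htail : (∑ i : Fin m, ℓ (c (i + Fin.castLE hkm (Fin.last k))) (c i)) ≤ m * L := by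
      have hterm : ∀ i : Fin m, ℓ (c (i + Fin.castLE hkm (Fin.last k))) (c i) ≤ L := by
        intro i
        have hne : c (i + Fin.castLE hkm (Fin.last k)) ≠ c i := by
          intro h
          have hd : Fin.castLE hkm (Fin.last k) = 0 := add_eq_left.mp (hc h)
          have := congrArg Fin.val hd
          simp [Fin.last] at this
          omega
        have hmem : |ℓ (c (i + Fin.castLE hkm (Fin.last k))) (c i)| ≤ L :=
          hL.2 ⟨_, _, hne, rfl⟩
        exact (le_abs_self _).trans hmem
      calc _ ≤ ∑ _i : Fin m, L := Finset.sum_le_sum (fun i _ => hterm i)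
        _ = m * L := by simp [mul_comm]
    rw [← neg_div, div_le_div_iff₀ hk0 hm0]
    nlinarith [hsum, htail]
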